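/- arXiv:1906.10191 — 2 statements merged into one kernel-verified Lean document; each statement's English description precedes it below -/
import Mathlib

section
/- For the three point vortex system on the plane, the derivative of the squared distance between vortices i and j satisfies d/dt |x_i(t)-x_j(t)|^2 = 2 c_ε ξ_k A(t) ( |x_i(t)-x_k(t)|^{-(3-ε)} - |x_k(t)-x_j(t)|^{-(3-ε)} ), where k is the third index and A(t) = x_j·x_k^⊥ - x_i·x_k^⊥ - x_j·x_i^⊥ is twice the signed area of the triangle with vertices x_i, x_j, x_k. -/
open scoped RealInnerProductSpace

noncomputable def perp (x : EuclideanSpace ℝ (Fin 2)) : EuclideanSpace ℝ (Fin 2) :=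
  !₂[x 1, -x 0]

noncomputable def K (ε c : ℝ) (x : EuclideanSpace ℝ (Fin 2)) : EuclideanSpace ℝ (Fin 2) :=
  (c / ‖x‖ ^ (3 - ε)) • perp x

lemma erase_eq : ∀ (i j k : Fin 3), i ≠ j → i ≠ k → j ≠ k →
    Finset.univ.erase i = ({j, k} : Finset (Fin 3)) := by decide

lemma inner_expand (a b : EuclideanSpace ℝ (Fin 2)) :
    ⟪a, b⟫ = a 0 * b 0 + a 1 * b 1 := by
  simp [PiLp.inner_apply, Fin.sum_univ_two, mul_comm]

lemma perp_apply0 (a : EuclideanSpace ℝ (Fin 2)) : perp a 0 = a 1 := rfl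
lemma perp_apply1 (a : EuclideanSpace ℝ (Fin 2)) : perp a 1 = -a 0 := rfl

/-- derivative of the squared distance between vortices `i` and `j`
in the three point vortex system. -/
theorem stmt_0 (ε c : ℝ) (hε : ε ∈ Set.Ioo (0:ℝ) 1) (hc : 0 < c)
    (ξ : Fin 3 → ℝ) (hξ : ∀ i, ξ i ≠ 0)
    (x : Fin 3 → ℝ → EuclideanSpace ℝ (Fin 2)) (I : Set ℝ) (hI : IsOpen I)
    (hdist : ∀ s ∈ I, ∀ i j : Fin 3, i ≠ j → x i s ≠ x j s)
    (hode : ∀ i : Fin 3, ∀ s ∈ I,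
      HasDerivAt (x i) (∑ j ∈ Finset.univ.erase i, ξ j • K ε c (x i s - x j s)) s)
    (i j k : Fin 3) (hij : i ≠ j) (hik : i ≠ k) (hjk : j ≠ k)
    (t : ℝ) (ht : t ∈ I) :
    HasDerivAt (fun s => ‖x i s - x j s‖ ^ 2)
      (2 * c * ξ k *
        (⟪x j t, perp (x k t)⟫ - ⟪x i t, perp (x k t)⟫ - ⟪x j t, perp (x i t)⟫) *
        (‖x i t - x k t‖ ^ (-(3 - ε)) - ‖x k t - x j t‖ ^ (-(3 - ε)))) t := by
  have hxi := hode i t ht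
  have hxj := hode j t ht
  rw [erase_eq i j k hij hik hjk, Finset.sum_pair hjk] at hxi
  rw [erase_eq j i k hij.symm hjk hik, Finset.sum_pair hik] at hxj
  have hu := hxi.sub hxj
  have h2 := (HasDerivAt.inner ℝ hu hu :)
  have hrw : (fun s => ‖x i s - x j s‖ ^ 2)
      = fun s => ⟪x i s - x j s, x i s - x j s⟫ := by
    funext s; rw [real_inner_self_eq_norm_sq]
  rw [hrw]
  refine h2.congr_deriv ?_
  -- scalar identity
  have hik' : x i t - x k t ≠ 0 := sub_ne_zero.2 (hdist t ht i k hik)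
  have hjk' : x j t - x k t ≠ 0 := sub_ne_zero.2 (hdist t ht j k hjk)
  have hs1 : (0:ℝ) < ‖x i t - x k t‖ ^ (3 - ε) :=
    Real.rpow_pos_of_pos (norm_pos_iff.2 hik') _
  have hs2 : (0:ℝ) < ‖x j t - x k t‖ ^ (3 - ε) :=
    Real.rpow_pos_of_pos (norm_pos_iff.2 hjk') _
  have hkj : ‖x k t - x j t‖ = ‖x j t - x k t‖ := norm_sub_rev _ _
  rw [hkj, Real.rpow_neg (norm_nonneg _), Real.rpow_neg (norm_nonneg _)]
  simp only [K, smul_smul, inner_expand, Pi.sub_apply, PiLp.sub_apply, PiLp.add_apply, PiLp.smul_apply,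
    smul_eq_mul, perp_apply0, perp_apply1]
  field_simp
  ring
end

section
/- Along any solution of the three point vortex system with pairwise distinct points, the ratio l_{1,2}(t)²/l_{2,3}(t)² satisfies d/dt ( l_{1,2}²/l_{2,3}² ) = ξ_1 ξ_3 · (2 c_ε A(t)/l_{2,3}(t)^4) · ( S · l_{3,1}(t)^{ε-3} − S_ε ), where S and S_ε are the invariants S = l_{1,2}²/ξ_3 + l_{2,3}²/ξ_1 + l_{3,1}²/ξ_2 and S_ε = l_{1,2}^{ε-1}/ξ_3 + l_{2,3}^{ε-1}/ξ_1 + l_{3,1}^{ε-1}/ξ_2. -/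
open scoped RealInnerProductSpace

lemma inner_perp' (u v : EuclideanSpace ℝ (Fin 2)) :
    ⟪u, perp v⟫ = u 0 * v 1 - u 1 * v 0 := by
  simp [perp, PiLp.inner_apply, Fin.sum_univ_two]
  ring

lemma inner_K' (ε c : ℝ) (u v : EuclideanSpace ℝ (Fin 2)) :
    ⟪u, K ε c v⟫ = c / ‖v‖ ^ (3 - ε) * (u 0 * v 1 - u 1 * v 0) := by
  rw [K, real_inner_smul_right, inner_perp']

/-- derivative of the ratio `l₁₂²/l₂₃²` expressed through the
invariants `S` and `S_ε`. -/
theorem stmt_4 (ε c : ℝ) (hε : ε ∈ Set.Ioo (0:ℝ) 1) (hc : 0 < c)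
    (ξ : Fin 3 → ℝ) (hξ : ∀ i, ξ i ≠ 0)
    (x : Fin 3 → ℝ → EuclideanSpace ℝ (Fin 2)) (I : Set ℝ) (hI : IsOpen I)
    (hdist : ∀ s ∈ I, ∀ i j : Fin 3, i ≠ j → x i s ≠ x j s)
    (hode : ∀ i : Fin 3, ∀ s ∈ I,
      HasDerivAt (x i) (∑ j ∈ Finset.univ.erase i, ξ j • K ε c (x i s - x j s)) s)
    (t : ℝ) (ht : t ∈ I)
    (A S Sε : ℝ)
    (hA : A = ⟪x 1 t, perp (x 2 t)⟫ - ⟪x 0 t, perp (x 2 t)⟫ - ⟪x 1 t, perp (x 0 t)⟫)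
    (hS : S = ‖x 0 t - x 1 t‖ ^ 2 / ξ 2 + ‖x 1 t - x 2 t‖ ^ 2 / ξ 0
        + ‖x 2 t - x 0 t‖ ^ 2 / ξ 1)
    (hSε : Sε = ‖x 0 t - x 1 t‖ ^ (ε - 1) / ξ 2 + ‖x 1 t - x 2 t‖ ^ (ε - 1) / ξ 0
        + ‖x 2 t - x 0 t‖ ^ (ε - 1) / ξ 1) :
    HasDerivAt (fun s => ‖x 0 s - x 1 s‖ ^ 2 / ‖x 1 s - x 2 s‖ ^ 2)
      (ξ 0 * ξ 2 * (2 * c * A / ‖x 1 t - x 2 t‖ ^ 4)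
        * (S * ‖x 2 t - x 0 t‖ ^ (ε - 3) - Sε)) t := by
  have h01 : x 0 t ≠ x 1 t := hdist t ht 0 1 (by decide)
  have h12 : x 1 t ≠ x 2 t := hdist t ht 1 2 (by decide)
  have h20 : x 2 t ≠ x 0 t := hdist t ht 2 0 (by decide)
  have hl12p : (0:ℝ) < ‖x 0 t - x 1 t‖ := by
    rw [norm_pos_iff, sub_ne_zero]; exact h01
  have hl23p : (0:ℝ) < ‖x 1 t - x 2 t‖ := by
    rw [norm_pos_iff, sub_ne_zero]; exact h12
  have hl31p : (0:ℝ) < ‖x 2 t - x 0 t‖ := by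
    rw [norm_pos_iff, sub_ne_zero]; exact h20
  -- the ODE derivatives at t
  have hd0 := hode 0 t ht
  have hd1 := hode 1 t ht
  have hd2 := hode 2 t ht
  have e0 : (Finset.univ.erase (0:Fin 3)) = {1, 2} := by decide
  have e1 : (Finset.univ.erase (1:Fin 3)) = {0, 2} := by decide
  have e2 : (Finset.univ.erase (2:Fin 3)) = {0, 1} := by decide
  rw [e0, Finset.sum_pair (by decide : (1:Fin 3) ≠ 2)] at hd0
  rw [e1, Finset.sum_pair (by decide : (0:Fin 3) ≠ 2)] at hd1
  rw [e2, Finset.sum_pair (by decide : (0:Fin 3) ≠ 1)] at hd2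
  set w12 : EuclideanSpace ℝ (Fin 2) :=
    (ξ 1 • K ε c (x 0 t - x 1 t) + ξ 2 • K ε c (x 0 t - x 2 t)) -
      (ξ 0 • K ε c (x 1 t - x 0 t) + ξ 2 • K ε c (x 1 t - x 2 t)) with hw12def
  set w23 : EuclideanSpace ℝ (Fin 2) :=
    (ξ 0 • K ε c (x 1 t - x 0 t) + ξ 2 • K ε c (x 1 t - x 2 t)) -
      (ξ 0 • K ε c (x 2 t - x 0 t) + ξ 1 • K ε c (x 2 t - x 1 t)) with hw23def
  have hda : HasDerivAt (fun s => ‖x 0 s - x 1 s‖ ^ 2)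
      (2 * ⟪x 0 t - x 1 t, w12⟫) t := by
    have h := (hd0.sub hd1).inner ℝ (hd0.sub hd1)
    simp only [real_inner_self_eq_norm_sq, Pi.sub_apply, ← hw12def] at h
    rwa [show ⟪x 0 t - x 1 t, w12⟫ + ⟪w12, x 0 t - x 1 t⟫
        = 2 * ⟪x 0 t - x 1 t, w12⟫ by rw [real_inner_comm w12]; ring] at h
  have hdb : HasDerivAt (fun s => ‖x 1 s - x 2 s‖ ^ 2)
      (2 * ⟪x 1 t - x 2 t, w23⟫) t := by
    have h := (hd1.sub hd2).inner ℝ (hd1.sub hd2)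
    simp only [real_inner_self_eq_norm_sq, Pi.sub_apply, ← hw23def] at h
    rwa [show ⟪x 1 t - x 2 t, w23⟫ + ⟪w23, x 1 t - x 2 t⟫
        = 2 * ⟪x 1 t - x 2 t, w23⟫ by rw [real_inner_comm w23]; ring] at h
  have hb0 : ‖x 1 t - x 2 t‖ ^ 2 ≠ 0 := pow_ne_zero _ (ne_of_gt hl23p)
  have hdiv : HasDerivAt (fun s => ‖x 0 s - x 1 s‖ ^ 2 / ‖x 1 s - x 2 s‖ ^ 2)
      ((2 * ⟪x 0 t - x 1 t, w12⟫ * ‖x 1 t - x 2 t‖ ^ 2 - ‖x 0 t - x 1 t‖ ^ 2 * (2 * ⟪x 1 t - x 2 t, w23⟫)) /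
        (‖x 1 t - x 2 t‖ ^ 2) ^ 2) t := hda.div hdb hb0
  convert hdiv using 1
  -- now the algebraic identity for the derivative value
  -- rewrite the inner products in coordinates
  have hinner12 : ⟪x 0 t - x 1 t, w12⟫ =
      ξ 2 * c * A * (‖x 2 t - x 0 t‖ ^ (ε - 3) - ‖x 1 t - x 2 t‖ ^ (ε - 3)) := by
    have hnr1 : ‖x 1 t - x 0 t‖ = ‖x 0 t - x 1 t‖ := norm_sub_rev _ _
    have hnr2 : ‖x 0 t - x 2 t‖ = ‖x 2 t - x 0 t‖ := norm_sub_rev _ _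
    have hcr31 : c / ‖x 2 t - x 0 t‖ ^ (3 - ε) = c * ‖x 2 t - x 0 t‖ ^ (ε - 3) := by
      rw [div_eq_mul_inv, ← Real.rpow_neg hl31p.le, neg_sub]
    have hcr23 : c / ‖x 1 t - x 2 t‖ ^ (3 - ε) = c * ‖x 1 t - x 2 t‖ ^ (ε - 3) := by
      rw [div_eq_mul_inv, ← Real.rpow_neg hl23p.le, neg_sub]
    rw [hw12def, inner_sub_right, inner_add_right, inner_add_right,
      real_inner_smul_right, real_inner_smul_right, real_inner_smul_right,
      real_inner_smul_right, inner_K', inner_K', inner_K', inner_K',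
      hnr1, hnr2, hcr31, hcr23, hA, inner_perp', inner_perp', inner_perp']
    simp only [PiLp.sub_apply]
    ring
  have hinner23 : ⟪x 1 t - x 2 t, w23⟫ =
      ξ 0 * c * A * (‖x 0 t - x 1 t‖ ^ (ε - 3) - ‖x 2 t - x 0 t‖ ^ (ε - 3)) := by
    have hnr1 : ‖x 1 t - x 0 t‖ = ‖x 0 t - x 1 t‖ := norm_sub_rev _ _
    have hnr3 : ‖x 2 t - x 1 t‖ = ‖x 1 t - x 2 t‖ := norm_sub_rev _ _
    have hcr12 : c / ‖x 0 t - x 1 t‖ ^ (3 - ε) = c * ‖x 0 t - x 1 t‖ ^ (ε - 3) := by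
      rw [div_eq_mul_inv, ← Real.rpow_neg hl12p.le, neg_sub]
    have hcr31 : c / ‖x 2 t - x 0 t‖ ^ (3 - ε) = c * ‖x 2 t - x 0 t‖ ^ (ε - 3) := by
      rw [div_eq_mul_inv, ← Real.rpow_neg hl31p.le, neg_sub]
    rw [hw23def, inner_sub_right, inner_add_right, inner_add_right,
      real_inner_smul_right, real_inner_smul_right, real_inner_smul_right,
      real_inner_smul_right, inner_K', inner_K', inner_K', inner_K',
      hnr1, hnr3, hcr12, hcr31, hA, inner_perp', inner_perp', inner_perp']
    simp only [PiLp.sub_apply]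
    ring
  -- rpow bookkeeping: l^(ε-3) * l^2 = l^(ε-1)
  have hres12 : ‖x 0 t - x 1 t‖ ^ (ε - 1)
      = ‖x 0 t - x 1 t‖ ^ (ε - 3) * ‖x 0 t - x 1 t‖ ^ 2 := by
    rw [← Real.rpow_natCast (‖x 0 t - x 1 t‖) 2, ← Real.rpow_add hl12p]
    congr 1; push_cast; ring
  have hres23 : ‖x 1 t - x 2 t‖ ^ (ε - 1)
      = ‖x 1 t - x 2 t‖ ^ (ε - 3) * ‖x 1 t - x 2 t‖ ^ 2 := by
    rw [← Real.rpow_natCast (‖x 1 t - x 2 t‖) 2, ← Real.rpow_add hl23p]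
    congr 1; push_cast; ring
  have hres31 : ‖x 2 t - x 0 t‖ ^ (ε - 1)
      = ‖x 2 t - x 0 t‖ ^ (ε - 3) * ‖x 2 t - x 0 t‖ ^ 2 := by
    rw [← Real.rpow_natCast (‖x 2 t - x 0 t‖) 2, ← Real.rpow_add hl31p]
    congr 1; push_cast; ring
  rw [hinner12, hinner23, hS, hSε, hres12, hres23, hres31]
  have h4 : ‖x 1 t - x 2 t‖ ^ 4 = (‖x 1 t - x 2 t‖ ^ 2) ^ 2 := by ring
  rw [h4]
  field_simp [hξ 0, hξ 1, hξ 2]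
  ring
end
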